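/- If A ⊆ ℕ is a multiplicatively net-normal set, then for every natural number k there exist a, b, c ∈ A such that a·b = c^k. -/
import Mathlib

open Filter

def MulFolner (F : ℕ → Finset ℕ) : Prop :=
  (∀ n, (F n).Nonempty) ∧ (∀ n, 0 ∉ F n) ∧
  ∀ k : ℕ, 0 < k → Tendsto
    (fun n => (((F n).filter (fun m => k * m ∈ F n)).card : ℝ) / (F n).card)
    atTop (nhds 1)

def NiceFolner (F : ℕ → Finset ℕ) : Prop :=
  ∃ L : ℕ → ℕ, (∀ n, 0 < L n) ∧ (∀ n, L n ∣ L (n + 1)) ∧ (∀ n, L n ≠ L (n + 1)) ∧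
    (∀ m : ℕ, 0 < m → ∀ᶠ n in atTop, m ∣ L n) ∧ (∀ n, F n = (L n).divisors)

open scoped Classical in
def MulNormalSet (F : ℕ → Finset ℕ) (A : Set ℕ) : Prop :=
  ∀ K : Finset ℕ, K.Nonempty → (∀ k ∈ K, 0 < k) → ∀ B : ℕ → Bool,
    Tendsto
      (fun n =>
        (((F n).filter (fun m => ∀ k ∈ K, (k * m ∈ A ↔ B k = true))).card : ℝ) / (F n).card)
      atTop (nhds ((1 / 2 : ℝ) ^ K.card))

open scoped Classical

/-- The factorial sequence gives a nice Følner sequence. -/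
lemma factorial_nice : NiceFolner (fun n => (Nat.factorial (n+1)).divisors) := by
  refine ⟨fun n => Nat.factorial (n+1), fun n => Nat.factorial_pos _,
    fun n => Nat.factorial_dvd_factorial (by omega),
    fun n => ne_of_lt ((Nat.factorial_lt (Nat.succ_pos n)).mpr (by omega)),
    ?_, fun n => rfl⟩
  intro m hm
  filter_upwards [eventually_ge_atTop m] with n hn
  exact Nat.dvd_factorial hm (by omega)

/-- Every net-normal set contains, for each `D`, a multiple `c` of `D+1`
with `c`, `2c`, `4c` all in `A`. -/
lemma exists_witness (A : Set ℕ)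
    (hA : ∀ F : ℕ → Finset ℕ, NiceFolner F → MulNormalSet F A) :
    ∀ D : ℕ, ∃ c, 0 < c ∧ (D+1) ∣ c ∧ c ∈ A ∧ 2*c ∈ A ∧ 4*c ∈ A := by
  intro D
  set E := D + 1 with hE
  have hEpos : 0 < E := Nat.succ_pos D
  have hnorm := hA _ factorial_nice
  set K : Finset ℕ := {E, 2*E, 4*E} with hK
  have hKne : K.Nonempty := ⟨E, by simp [hK]⟩
  have hKpos : ∀ j ∈ K, 0 < j := by
    intro j hj
    simp only [hK, Finset.mem_insert, Finset.mem_singleton] at hj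
    rcases hj with rfl | rfl | rfl <;> omega
  have hten := hnorm K hKne hKpos (fun _ => true)
  have hev := hten.eventually_const_lt (show (0:ℝ) < (1/2)^K.card by positivity)
  obtain ⟨n, hn⟩ := hev.exists
  set S := ((Nat.factorial (n+1)).divisors).filter
      (fun m => ∀ j ∈ K, (j * m ∈ A ↔ (fun _ : ℕ => true) j = true)) with hS
  have hSne : S.Nonempty := by
    rw [← Finset.card_pos]
    rcases Nat.eq_zero_or_pos S.card with h0 | h; swap
    · exact h
    · rw [h0] at hn; simp at hn
  obtain ⟨m, hm⟩ := hSne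
  rw [hS, Finset.mem_filter] at hm
  obtain ⟨hmd, hmA⟩ := hm
  have hmpos : 0 < m := Nat.pos_of_mem_divisors hmd
  refine ⟨E * m, by positivity, Dvd.intro m rfl, ?_, ?_, ?_⟩
  · have := hmA E (by simp [hK]); simpa using this
  · have := hmA (2*E) (by simp [hK]); rw [mul_assoc] at this; simpa using this
  · have := hmA (4*E) (by simp [hK]); rw [mul_assoc] at this; simpa using this

/-- If `A ⊆ ℕ` is multiplicatively net-normal (i.e. `(F n)`-normal in `(ℕ,×)` for
every nice Følner sequence `(F n)`), then for every natural number `k ≥ 1` there are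
`a, b, c ∈ A` with `a * b = c ^ k`. -/
theorem net_normal_solves_ab_eq_ck
    (A : Set ℕ) (hA : ∀ F : ℕ → Finset ℕ, NiceFolner F → MulNormalSet F A)
    (k : ℕ) (hk : 0 < k) :
    ∃ a ∈ A, ∃ b ∈ A, ∃ c ∈ A, a * b = c ^ k := by
  classical
  choose g hg using exists_witness A hA
  -- recursive sequence
  set c : ℕ → ℕ := fun n =>
    Nat.rec (motive := fun _ => ℕ) (g 0)
      (fun n cn => g (2 * cn * Nat.factorial (n+1) - 1)) n with hc
  have hc0 : c 0 = g 0 := rfl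
  have hcs : ∀ n, c (n+1) = g (2 * c n * Nat.factorial (n+1) - 1) := fun n => rfl
  have hpos : ∀ n, 0 < c n := by
    intro n; cases n with
    | zero => rw [hc0]; exact (hg 0).1
    | succ n => rw [hcs]; exact (hg _).1
  have hmem : ∀ n, c n ∈ A ∧ 2 * c n ∈ A ∧ 4 * c n ∈ A := by
    intro n; cases n with
    | zero => rw [hc0]; exact ⟨(hg 0).2.2.1, (hg 0).2.2.2.1, (hg 0).2.2.2.2⟩
    | succ n => rw [hcs]; exact ⟨(hg _).2.2.1, (hg _).2.2.2.1, (hg _).2.2.2.2⟩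
  have hdvd : ∀ n, 2 * c n * Nat.factorial (n+1) ∣ c (n+1) := by
    intro n
    have h1 : 0 < 2 * c n * Nat.factorial (n+1) :=
      Nat.mul_pos (Nat.mul_pos (by norm_num) (hpos n)) (Nat.factorial_pos _)
    have h2 := (hg (2 * c n * Nat.factorial (n+1) - 1)).2.1
    rw [hcs n]
    have h3 : 2 * c n * Nat.factorial (n+1) - 1 + 1 = 2 * c n * Nat.factorial (n+1) := by omega
    rwa [h3] at h2
  have hlt : ∀ n, c n < c (n+1) := by
    intro n
    have h1 := Nat.le_of_dvd (hpos (n+1)) (hdvd n)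
    have h2 : 0 < Nat.factorial (n+1) := Nat.factorial_pos _
    have h3 : 0 < c n := hpos n
    nlinarith
  have hcdvd : ∀ n, c n ∣ c (n+1) := by
    intro n
    refine dvd_trans ⟨2 * Nat.factorial (n+1), by ring⟩ (hdvd n)
  have hfacdvd : ∀ n, Nat.factorial (n+1) ∣ c (n+1) := by
    intro n
    exact dvd_trans (dvd_mul_left _ _) (hdvd n)
  -- the nice Følner sequence
  set L : ℕ → ℕ := fun n => c n ^ k with hL
  set F : ℕ → Finset ℕ := fun n => (L n).divisors with hF
  have hLpos : ∀ n, 0 < L n := fun n => pow_pos (hpos n) k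
  have hnice : NiceFolner F := by
    refine ⟨L, hLpos, fun n => pow_dvd_pow_of_dvd (hcdvd n) k,
      fun n => ne_of_lt (Nat.pow_lt_pow_left (hlt n) hk.ne'), ?_, fun n => rfl⟩
    intro m hm
    filter_upwards [eventually_ge_atTop (m+1)] with n hn
    have h1 : m ∣ Nat.factorial n := Nat.dvd_factorial hm (by omega)
    obtain ⟨j, rfl⟩ : ∃ j, n = j + 1 := ⟨n - 1, by omega⟩
    exact dvd_trans (dvd_trans h1 (hfacdvd j)) (dvd_pow_self _ hk.ne')
  have hnorm := hA F hnice
  set K : Finset ℕ := {1, 2^k} with hK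
  have h2k : 1 < 2^k := Nat.one_lt_two_pow_iff.mpr hk.ne'
  have hKcard : K.card = 2 := by
    rw [hK, Finset.card_insert_of_notMem (by simp; omega), Finset.card_singleton]
  have hKne : K.Nonempty := ⟨1, by simp [hK]⟩
  have hKpos : ∀ j ∈ K, 0 < j := by
    intro j hj
    simp only [hK, Finset.mem_insert, Finset.mem_singleton] at hj
    rcases hj with rfl | rfl
    · omega
    · positivity
  have hten := hnorm K hKne hKpos (fun _ => false)
  rw [hKcard] at hten
  have hev := hten.eventually_lt_const (show ((1:ℝ)/2)^2 < 1/2 by norm_num)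
  obtain ⟨n, hn⟩ := hev.exists
  -- the "bad" set
  set bad := (F n).filter
      (fun m => ∀ j ∈ K, (j * m ∈ A ↔ (fun _ : ℕ => false) j = true)) with hbad
  have hNpos : 0 < (F n).card := by
    rw [Finset.card_pos]
    exact ⟨1, Nat.one_mem_divisors.mpr (hLpos n).ne'⟩
  have hbadlt : 2 * bad.card < (F n).card := by
    rw [div_lt_iff₀ (by exact_mod_cast hNpos)] at hn
    have : (bad.card : ℝ) < 1/2 * (F n).card := hn
    have h2 : (2 * bad.card : ℝ) < (F n).card := by linarith
    exact_mod_cast h2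
  -- good set and involution
  set S1 := (F n).filter
      (fun m => ¬ ∀ j ∈ K, (j * m ∈ A ↔ (fun _ : ℕ => false) j = true)) with hS1
  have hS1sub : S1 ⊆ F n := Finset.filter_subset _ _
  have hS1card : S1.card = (F n).card - bad.card := by
    rw [hS1, Finset.filter_not, Finset.card_sdiff_of_subset (Finset.filter_subset _ _)]
  set φ : ℕ → ℕ := fun m => L n / m with hφ
  have hφmem : ∀ m ∈ F n, φ m ∈ F n := by
    intro m hm
    rw [hF, Nat.mem_divisors] at *
    exact ⟨Nat.div_dvd_of_dvd hm.1, hm.2⟩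
  have hφφ : ∀ m ∈ F n, φ (φ m) = m := by
    intro m hm
    rw [hF, Nat.mem_divisors] at hm
    exact Nat.div_div_self hm.1 hm.2
  set S2 := S1.image φ with hS2
  have hS2sub : S2 ⊆ F n := by
    intro x hx
    rw [hS2, Finset.mem_image] at hx
    obtain ⟨m, hm, rfl⟩ := hx
    exact hφmem m (hS1sub hm)
  have hS2card : S2.card = S1.card := by
    rw [hS2]
    apply Finset.card_image_of_injOn
    intro a ha b hb hab
    have := congrArg φ hab
    rwa [hφφ a (hS1sub ha), hφφ b (hS1sub hb)] at this
  have hUsub : S1 ∪ S2 ⊆ F n := Finset.union_subset hS1sub hS2sub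
  have hUcard : (S1 ∪ S2).card ≤ (F n).card := Finset.card_le_card hUsub
  have hIcard : 0 < (S1 ∩ S2).card := by
    have := Finset.card_inter_add_card_union S1 S2
    have hS1c : bad.card ≤ (F n).card := Finset.card_le_card (Finset.filter_subset _ _)
    omega
  obtain ⟨m, hm⟩ := Finset.card_pos.mp hIcard
  rw [Finset.mem_inter] at hm
  obtain ⟨hm1, hm2⟩ := hm
  rw [hS2, Finset.mem_image] at hm2
  obtain ⟨m', hm'1, hmm'⟩ := hm2
  -- unpack conditions
  have hQ : ∀ x, x ∈ S1 → (x ∈ A ∨ 2^k * x ∈ A) := by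
    intro x hx
    rw [hS1, Finset.mem_filter] at hx
    have h := hx.2
    push_neg at h
    obtain ⟨j, hj, hjc⟩ := h
    simp only [hK, Finset.mem_insert, Finset.mem_singleton] at hj
    rcases hj with rfl | rfl
    · left; have h1 : 1 * x ∈ A := by tauto
      rwa [one_mul] at h1
    · right; tauto
  have hQm : m ∈ A ∨ 2^k * m ∈ A := hQ m hm1
  have hQm' : m' ∈ A ∨ 2^k * m' ∈ A := hQ m' hm'1
  have hm'mem : m' ∈ (L n).divisors := hS1sub hm'1
  have hm'div : m' ∣ L n := (Nat.mem_divisors.mp hm'mem).1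
  have hprod : m * m' = L n := by
    rw [← hmm', hφ]
    exact Nat.div_mul_cancel hm'div
  obtain ⟨hcA, h2cA, h4cA⟩ := hmem n
  rcases hQm with hma | hma <;> rcases hQm' with hmb | hmb
  · exact ⟨m, hma, m', hmb, c n, hcA, by rw [hprod, hL]⟩
  · refine ⟨m, hma, 2^k * m', hmb, 2 * c n, h2cA, ?_⟩
    rw [mul_pow, show m * (2^k * m') = 2^k * (m * m') by ring, hprod, hL]
  · refine ⟨2^k * m, hma, m', hmb, 2 * c n, h2cA, ?_⟩
    rw [mul_pow, show 2^k * m * m' = 2^k * (m * m') by ring, hprod, hL]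
  · refine ⟨2^k * m, hma, 2^k * m', hmb, 4 * c n, h4cA, ?_⟩
    have h4 : (4:ℕ) = 2 * 2 := rfl
    rw [h4, mul_pow, mul_pow, show 2^k * m * (2^k * m') = 2^k * 2^k * (m * m') by ring,
      hprod, hL]
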